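/- arXiv:1204.2090 — 2 statements merged into one kernel-verified Lean document; each statement's English description precedes it below -/
import Mathlib

section
/- If a differentiable function C : (0,1)² → (0,1) is self-chaining (C(u^k,v^k) = C(u,v)^k for all k > 0), then it satisfies the PDE ∂C/∂u(u,v)·u·log u + ∂C/∂v(u,v)·v·log v = C(u,v)·log C(u,v) for all u, v ∈ (0,1). -/
/-- A differentiable self-chaining function `C : (0,1)² → (0,1)` satisfies the
PDE `C_u(u,v)·u·log u + C_v(u,v)·v·log v = C(u,v)·log C(u,v)`. -/
theorem selfChaining_PDE
    (C : ℝ → ℝ → ℝ)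
    (hmap : ∀ u v, u ∈ Set.Ioo (0 : ℝ) 1 → v ∈ Set.Ioo (0 : ℝ) 1 →
      C u v ∈ Set.Ioo (0 : ℝ) 1)
    (hdiff1 : ∀ u v, u ∈ Set.Ioo (0 : ℝ) 1 → v ∈ Set.Ioo (0 : ℝ) 1 →
      DifferentiableAt ℝ (fun x => C x v) u)
    (hdiff2 : ∀ u v, u ∈ Set.Ioo (0 : ℝ) 1 → v ∈ Set.Ioo (0 : ℝ) 1 →
      DifferentiableAt ℝ (fun y => C u y) v)
    (hsc : ∀ u v, u ∈ Set.Ioo (0 : ℝ) 1 → v ∈ Set.Ioo (0 : ℝ) 1 →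
      ∀ k : ℝ, 0 < k → C (u ^ k) (v ^ k) = C u v ^ k) :
    ∀ u v, u ∈ Set.Ioo (0 : ℝ) 1 → v ∈ Set.Ioo (0 : ℝ) 1 →
      deriv (fun x => C x v) u * u * Real.log u +
        deriv (fun y => C u y) v * v * Real.log v =
        C u v * Real.log (C u v) := by
  intro u v hu hv
  obtain ⟨hu0, hu1⟩ := hu
  obtain ⟨hv0, hv1⟩ := hv
  obtain ⟨hc0, hc1⟩ := hmap u v ⟨hu0, hu1⟩ ⟨hv0, hv1⟩
  set A := deriv (fun x => C x v) u with hA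
  set B := deriv (fun y => C u y) v with hB
  set c := C u v with hcdef
  -- derivative of k ↦ u ^ k at 1
  have hdu : HasDerivAt (fun k : ℝ => u ^ k) (u * Real.log u) 1 := by
    have := (Real.hasStrictDerivAt_const_rpow hu0 1).hasDerivAt
    simpa [Real.rpow_one] using this
  have hdv : HasDerivAt (fun k : ℝ => v ^ k) (v * Real.log v) 1 := by
    have := (Real.hasStrictDerivAt_const_rpow hv0 1).hasDerivAt
    simpa [Real.rpow_one] using this
  -- F : k ↦ C (u^k) v  has derivative A * (u log u) at 1
  have hCu : HasDerivAt (fun x => C x v) A u := (hdiff1 u v ⟨hu0, hu1⟩ ⟨hv0, hv1⟩).hasDerivAt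
  have hF : HasDerivAt (fun k : ℝ => C (u ^ k) v) (A * (u * Real.log u)) 1 := by
    have hCu' : HasDerivAt (fun x => C x v) A ((fun k : ℝ => u ^ k) 1) := by
      simpa [Real.rpow_one] using hCu
    exact hCu'.comp 1 hdu
  -- ψ : k ↦ log (C u (v^k)) has derivative c⁻¹ * (B * (v log v)) at 1
  have hCv : HasDerivAt (fun y => C u y) B v := (hdiff2 u v ⟨hu0, hu1⟩ ⟨hv0, hv1⟩).hasDerivAt
  have hinner : HasDerivAt (fun k : ℝ => C u (v ^ k)) (B * (v * Real.log v)) 1 := by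
    have hCv' : HasDerivAt (fun y => C u y) B ((fun k : ℝ => v ^ k) 1) := by
      simpa [Real.rpow_one] using hCv
    exact hCv'.comp 1 hdv
  have hψ : HasDerivAt (fun k : ℝ => Real.log (C u (v ^ k)))
      (c⁻¹ * (B * (v * Real.log v))) 1 := by
    have hlog : HasDerivAt Real.log c⁻¹ ((fun k : ℝ => C u (v ^ k)) 1) := by
      simpa [Real.rpow_one, ← hcdef] using Real.hasDerivAt_log hc0.ne'
    exact hlog.comp 1 hinner
  -- k ↦ k⁻¹ has derivative -1 at 1
  have hinv : HasDerivAt (fun k : ℝ => k⁻¹) (-1) 1 := by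
    simpa using hasDerivAt_inv (one_ne_zero : (1:ℝ) ≠ 0)
  have hψinv : HasDerivAt (fun k : ℝ => Real.log (C u (v ^ k⁻¹)))
      (c⁻¹ * (B * (v * Real.log v)) * (-1)) 1 := by
    have hψ' : HasDerivAt (fun k : ℝ => Real.log (C u (v ^ k)))
        (c⁻¹ * (B * (v * Real.log v))) ((fun k : ℝ => k⁻¹) 1) := by
      simpa using hψ
    exact hψ'.comp 1 hinv
  -- G : k ↦ log (C u (v^k⁻¹)) * k
  have hG : HasDerivAt (fun k : ℝ => Real.log (C u (v ^ k⁻¹)) * k)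
      (c⁻¹ * (B * (v * Real.log v)) * (-1) * 1 + Real.log c * 1) 1 := by
    have := hψinv.mul (hasDerivAt_id (1:ℝ))
    simpa [Real.rpow_one, ← hcdef, Pi.mul_def] using this
  have hexpG : HasDerivAt (fun k : ℝ => Real.exp (Real.log (C u (v ^ k⁻¹)) * k))
      (c * (c⁻¹ * (B * (v * Real.log v)) * (-1) * 1 + Real.log c * 1)) 1 := by
    have h := hG.exp
    have hpt : Real.exp (Real.log (C u (v ^ (1:ℝ)⁻¹)) * 1) = c := by
      simp [← hcdef, Real.exp_log hc0]
    rw [show Real.exp (Real.log (C u (v ^ (1:ℝ)⁻¹)) * 1) = c from hpt] at h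
    exact h
  -- the two functions agree near 1
  have hEq : (fun k : ℝ => C (u ^ k) v)
      =ᶠ[nhds 1] (fun k : ℝ => Real.exp (Real.log (C u (v ^ k⁻¹)) * k)) := by
    filter_upwards [Ioi_mem_nhds (zero_lt_one : (0:ℝ) < 1)] with k hk
    have hk0 : 0 < k := hk
    have hvk : v ^ k⁻¹ ∈ Set.Ioo (0:ℝ) 1 :=
      ⟨Real.rpow_pos_of_pos hv0 _, Real.rpow_lt_one hv0.le hv1 (by positivity)⟩
    have hchain := hsc u (v ^ k⁻¹) ⟨hu0, hu1⟩ hvk k hk0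
    have hvv : (v ^ k⁻¹ : ℝ) ^ k = v := by
      rw [← Real.rpow_mul hv0.le, inv_mul_cancel₀ hk0.ne', Real.rpow_one]
    rw [hvv] at hchain
    have hpos : 0 < C u (v ^ k⁻¹) := (hmap u (v ^ k⁻¹) ⟨hu0, hu1⟩ hvk).1
    rw [hchain, Real.rpow_def_of_pos hpos]
  -- equate the two derivatives
  have hF2 : HasDerivAt (fun k : ℝ => C (u ^ k) v)
      (c * (c⁻¹ * (B * (v * Real.log v)) * (-1) * 1 + Real.log c * 1)) 1 :=
    hexpG.congr_of_eventuallyEq hEq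
  have key : A * (u * Real.log u)
      = c * (c⁻¹ * (B * (v * Real.log v)) * (-1) * 1 + Real.log c * 1) :=
    hF.unique hF2
  have hcne : c ≠ 0 := hc0.ne'
  field_simp at key
  nlinarith [key]
end

section
/- If φ : (0,1] → [0,∞) is a strict Archimedean generator (continuous, strictly decreasing, φ(1) = 0, lim_{u→0+} φ(u) = ∞) such that the associated copula C(u,v) = φ⁻¹(φ(u) + φ(v)) is self-chaining, then the function ψ = φ⁻¹ (the Laplace-transform candidate) satisfies ψ(z)^(1/N) = ψ(2·φ(φ⁻¹(z/2)^(1/N))) for all z ≥ 0 and all positive integers N; in particular ψ is an N-th power of another completely specified function for every N. -/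
/-- If the Archimedean copula of a strict generator `φ` is self-chaining, then
the inverse generator `ψ = φ⁻¹` satisfies
`ψ(z)^(1/N) = ψ(2·φ(φ⁻¹(z/2)^(1/N)))` for all `z ≥ 0` and positive integers
`N`; in particular `ψ` is an `N`-th power of another function for every `N`. -/
theorem archimedean_selfChaining_infDiv_identity
    (φ ψ : ℝ → ℝ)
    (hφcont : ContinuousOn φ (Set.Ioc 0 1))
    (hφanti : StrictAntiOn φ (Set.Ioc 0 1))
    (hφ1 : φ 1 = 0)
    (hφmap : ∀ u ∈ Set.Ioc (0 : ℝ) 1, 0 ≤ φ u)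
    (hφtop : Filter.Tendsto φ (nhdsWithin 0 (Set.Ioc 0 1)) Filter.atTop)
    (hψmap : ∀ z : ℝ, 0 ≤ z → ψ z ∈ Set.Ioc (0 : ℝ) 1)
    (hinv1 : ∀ u ∈ Set.Ioc (0 : ℝ) 1, ψ (φ u) = u)
    (hinv2 : ∀ z : ℝ, 0 ≤ z → φ (ψ z) = z)
    (hsc : ∀ u v : ℝ, u ∈ Set.Ioc (0 : ℝ) 1 → v ∈ Set.Ioc (0 : ℝ) 1 →
      ∀ k : ℝ, 0 < k → ψ (φ (u ^ k) + φ (v ^ k)) = ψ (φ u + φ v) ^ k) :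
    (∀ z : ℝ, 0 ≤ z → ∀ N : ℕ, 0 < N →
      ψ z ^ ((1 : ℝ) / N) = ψ (2 * φ (ψ (z / 2) ^ ((1 : ℝ) / N)))) ∧
    (∀ N : ℕ, 0 < N → ∃ ψN : ℝ → ℝ, ∀ z : ℝ, 0 ≤ z → ψ z = ψN z ^ (N : ℕ)) := by

  have key : ∀ z : ℝ, 0 ≤ z → ∀ N : ℕ, 0 < N →
      ψ z ^ ((1 : ℝ) / N) = ψ (2 * φ (ψ (z / 2) ^ ((1 : ℝ) / N))) := by
    intro z hz N hN
    have hz2 : (0:ℝ) ≤ z / 2 := by linarith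
    have hu := hψmap (z/2) hz2
    have hk : (0:ℝ) < 1 / N := by positivity
    have h := hsc (ψ (z/2)) (ψ (z/2)) hu hu ((1:ℝ)/N) hk
    have hφψ : φ (ψ (z/2)) = z / 2 := hinv2 _ hz2
    rw [hφψ] at h
    have : z / 2 + z / 2 = z := by ring
    rw [this] at h
    rw [← h]
    ring_nf
  refine ⟨key, ?_⟩
  intro N hN
  refine ⟨fun z => ψ (2 * φ (ψ (z / 2) ^ ((1 : ℝ) / N))), fun z hz => ?_⟩
  have h := key z hz N hN
  have hψz := hψmap z hz
  have hψpos : 0 ≤ ψ z := le_of_lt hψz.1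
  have : (ψ z ^ ((1:ℝ)/N)) ^ (N : ℕ) = ψ z := by
    rw [← Real.rpow_natCast (ψ z ^ ((1:ℝ)/N)) N, ← Real.rpow_mul hψpos]
    field_simp
    exact Real.rpow_one _
  rw [← this, h]
end
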